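/- On the arc set of the subobject classifier Ω of graphs, the conjunction operation ∧ (classifying ⟨⊤,⊤⟩ : 1 → Ω × Ω) computes the meet with respect to the order 0_A < s, t < st < A (with s and t incomparable). -/

import Mathlib

/-- A directed graph: nodes, arcs, source and target maps. -/
structure DGraph where
  N : Type
  A : Type
  src : A → N
  tgt : A → N

/-- A graph morphism. -/
@[ext]
structure Hom (G H : DGraph) where
  fN : G.N → H.N
  fA : G.A → H.A
  hsrc : ∀ a, H.src (fA a) = fN (G.src a)
  htgt : ∀ a, H.tgt (fA a) = fN (G.tgt a)

/-- Composition of graph morphisms. -/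
def Hom.comp {G H K : DGraph} (g : Hom H K) (f : Hom G H) : Hom G K where
  fN := g.fN ∘ f.fN
  fA := g.fA ∘ f.fA
  hsrc a := by simp [g.hsrc, f.hsrc]
  htgt a := by simp [g.htgt, f.htgt]

/-- The arcs of the subobject classifier of graphs. -/
inductive OmegaA | zero | s | t | st | top
deriving DecidableEq

/-- The subobject classifier graph `Ω`: nodes are `Bool` (`true` = "in",
`false` = "out"); arcs `0_A : out→out`, `s : in→out`, `t : out→in`,
`st : in→in`, `A : in→in`. -/
def Omega : DGraph where
  N := Bool
  A := OmegaA
  src a := match a with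
    | .zero => false | .s => true | .t => false | .st => true | .top => true
  tgt a := match a with
    | .zero => false | .s => false | .t => true | .st => true | .top => true

/-- A subgraph of `G`, given by a set of nodes and a set of arcs whose
endpoints belong to the node set. -/
def IsSubgraph (G : DGraph) (SN : Set G.N) (SA : Set G.A) : Prop :=
  ∀ a ∈ SA, G.src a ∈ SN ∧ G.tgt a ∈ SN

/-- `χ : G → Ω` classifies the subgraph `(SN, SA)`: the subgraph is the pullback
of `⊤ : 1 → Ω` (picking the node `true` and the arc `top`) along `χ`. -/
def Classifies {G : DGraph} (χ : Hom G Omega) (SN : Set G.N) (SA : Set G.A) : Prop :=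
  (∀ n, n ∈ SN ↔ χ.fN n = true) ∧ (∀ a, a ∈ SA ↔ χ.fA a = OmegaA.top)

/-- The order on the arcs of `Ω`: `0_A < s, t < st < A` with `s, t` incomparable. -/
def leA : OmegaA → OmegaA → Prop := fun x y =>
  x = y ∨ x = OmegaA.zero ∨ y = OmegaA.top ∨ (x ≠ OmegaA.top ∧ y = OmegaA.st)

/-- The meet on the arcs of `Ω` with respect to the order
`0_A < s, t < st < A` (`s`, `t` incomparable). -/
def meetA : OmegaA → OmegaA → OmegaA
  | .top, x => x
  | x, .top => x
  | .zero, _ => .zero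
  | _, .zero => .zero
  | .st, x => x
  | x, .st => x
  | .s, .s => .s
  | .t, .t => .t
  | .s, .t => .zero
  | .t, .s => .zero

/-- Componentwise product of graphs. -/
def prodG (G H : DGraph) : DGraph :=
  ⟨G.N × H.N, G.A × H.A, fun a => (G.src a.1, H.src a.2), fun a => (G.tgt a.1, H.tgt a.2)⟩

instance : ∀ x y, Decidable (leA x y) := fun x y => by unfold leA; infer_instance

/-- the conjunction `∧ : Ω × Ω → Ω`, i.e. the characteristic map of
`⟨⊤,⊤⟩ : 1 → Ω × Ω` (whose image has node `(true,true)` and arc `(A,A)`),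
computes on arcs the meet for the order `0_A < s, t < st < A`. -/
theorem wedge_is_meet (χ : Hom (prodG Omega Omega) Omega)
    (hχ : Classifies χ ({((true : Bool), (true : Bool))} : Set (prodG Omega Omega).N)
      ({(OmegaA.top, OmegaA.top)} : Set (prodG Omega Omega).A)) :
    ∀ p : OmegaA × OmegaA,
      leA (χ.fA p) p.1 ∧ leA (χ.fA p) p.2 ∧
        ∀ c, leA c p.1 → leA c p.2 → leA c (χ.fA p) := by
  have hn : ∀ n, χ.fN n = true ↔ n = ((true : Bool), (true : Bool)) :=
    fun n => ((hχ.1 n).symm).trans Set.mem_singleton_iff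
  have hc : ∀ q, χ.fA q = OmegaA.top ↔ q = (OmegaA.top, OmegaA.top) :=
    fun q => ((hχ.2 q).symm).trans Set.mem_singleton_iff
  have hn' : ∀ x y : Bool, χ.fN (x, y) = true ↔ x = true ∧ y = true := fun x y =>
    (hn (x, y)).trans
      ⟨fun h => ⟨congrArg Prod.fst h, congrArg Prod.snd h⟩,
       fun h => by obtain ⟨rfl, rfl⟩ := h; rfl⟩
  have hq' : ∀ x y : OmegaA, χ.fA (x, y) = OmegaA.top ↔ x = OmegaA.top ∧ y = OmegaA.top :=
    fun x y =>
    (hc (x, y)).trans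
      ⟨fun h => ⟨congrArg Prod.fst h, congrArg Prod.snd h⟩,
       fun h => by obtain ⟨rfl, rfl⟩ := h; rfl⟩
  have htt : χ.fN ((true : Bool), (true : Bool)) = true := (hn' true true).mpr ⟨rfl, rfl⟩
  have key : ∀ p : OmegaA × OmegaA, χ.fA p = meetA p.1 p.2 := by
    rintro ⟨a, b⟩
    have hs := χ.hsrc (a, b)
    have ht := χ.htgt (a, b)
    have hq := hq' a b
    cases h : χ.fA (a, b) <;> rw [h] at hs ht hq <;> cases a <;> cases b <;>
      first
        | rfl
        | exact h
        | exact OmegaA.noConfusion (hq.mp rfl).1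
        | exact OmegaA.noConfusion (hq.mp rfl).2
        | exact OmegaA.noConfusion (hq.mpr ⟨rfl, rfl⟩)
        | exact Bool.noConfusion (hs.trans htt)
        | exact Bool.noConfusion (ht.trans htt)
        | exact Bool.noConfusion ((hn' _ _).mp hs.symm).1
        | exact Bool.noConfusion ((hn' _ _).mp hs.symm).2
        | exact Bool.noConfusion ((hn' _ _).mp ht.symm).1
        | exact Bool.noConfusion ((hn' _ _).mp ht.symm).2
  rintro ⟨a, b⟩
  rw [key (a, b)]
  refine ⟨?_, ?_, fun c => ?_⟩
  · cases a <;> cases b <;> decide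
  · cases a <;> cases b <;> decide
  · cases a <;> cases b <;> cases c <;> decide
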